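/- Consider the switched linear system with discrete and distributed delays ẋ(t) = A⁰_{σ(t)} x(t) + Σ_{i=1}^{m} A^i_{σ(t)} x(t − h^i_{σ(t)}) + ∫_{−h}^{0} B_{σ(t)}(θ) x(t+θ) dθ, t ≥ 0, σ ∈ Σ₊, where for each k = 1,…,N the delays satisfy 0 < h^1_k ≤ … ≤ h^m_k ≤ h, A⁰_k, A^i_k ∈ ℝ^{n×n}, and B_k : [−h,0] → ℝ^{n×n} is continuous. If there exists ξ ∈ ℝⁿ, ξ ≫ 0, such that (M(A⁰_k) + Σ_{i=1}^{m} |A^i_k| + ∫_{−h}^{0} |B_k(s)| ds) ξ ≪ 0 for every k = 1,…,N, then the system is exponentially stable under arbitrary switching: there exist M > 0, α > 0 such that every solution with initial function φ ∈ C([−h,0],ℝⁿ) and any σ ∈ Σ₊ satisfies ‖x(t)‖ ≤ M e^{−αt} ‖φ‖ for all t ≥ 0. -/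

import Mathlib

open MeasureTheory Set Filter Matrix
open scoped ENNReal

noncomputable section

/-- Row-sum matrix norm (the operator norm induced by the `∞`-norm). -/
def matNorm {p q : ℕ} (A : Matrix (Fin p) (Fin q) ℝ) : ℝ :=
  ⨆ i, ∑ j, |A i j|

/-- The Metzler matrix `M(A)` associated with `A`. -/
def metz {n : ℕ} (A : Matrix (Fin n) (Fin n) ℝ) : Matrix (Fin n) (Fin n) ℝ :=
  Matrix.of fun i j => if i = j then A i j else |A i j|

/-- A switching signal: piecewise constant, right continuous, with strictly
positive dwell time (and normalized to be constant on `(-∞, 0]`). -/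
def IsSwitchingSignal {N : ℕ} (σ : ℝ → Fin N) : Prop :=
  (∀ t ≤ (0:ℝ), σ t = σ 0) ∧
  ∃ d : ℝ, 0 < d ∧ ∃ τ : ℕ → ℝ, τ 0 = 0 ∧ (∀ k, τ k + d ≤ τ (k + 1)) ∧
    ∀ k : ℕ, ∀ t ∈ Set.Ico (τ k) (τ (k + 1)), σ t = σ (τ k)

/-- `x` is a solution of the switched system with discrete delays `hd` and distributed
delay kernel `B`:
`ẋ(t) = A⁰_{σ(t)} x(t) + Σ_l A^l_{σ(t)} x(t - h^l_{σ(t)}) + ∫_{-h}^0 B_{σ(t)}(θ) x(t+θ) dθ`,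
with switching signal `σ` and initial function `φ`. -/
def IsSolutionD (h : ℝ) {N n m : ℕ} (σ : ℝ → Fin N)
    (A0 : Fin N → Matrix (Fin n) (Fin n) ℝ)
    (A : Fin N → Fin m → Matrix (Fin n) (Fin n) ℝ)
    (hd : Fin N → Fin m → ℝ)
    (B : Fin N → ℝ → Matrix (Fin n) (Fin n) ℝ)
    (φ : C(Set.Icc (-h) (0:ℝ), Fin n → ℝ)) (x : ℝ → Fin n → ℝ) : Prop :=
  ContinuousOn x (Set.Ici (-h)) ∧
  (∀ θ : Set.Icc (-h) (0:ℝ), x (θ : ℝ) = φ θ) ∧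
  ∀ t : ℝ, 0 ≤ t → (∀ᶠ s in nhds t, σ s = σ t) → ∀ i,
    HasDerivWithinAt (fun s => x s i)
      ((∑ j, A0 (σ t) i j * x t j) + (∑ l, ∑ j, A (σ t) l i j * x (t - hd (σ t) l) j) +
        ∑ j, ∫ θ in (-h)..(0:ℝ), B (σ t) θ i j * x (t + θ) j)
      (Set.Ici t) t

/-- Exponential stability, under arbitrary switching, of the switched system with
discrete and distributed delays. -/
def ExpStableSwD (h : ℝ) {N n m : ℕ}
    (A0 : Fin N → Matrix (Fin n) (Fin n) ℝ)
    (A : Fin N → Fin m → Matrix (Fin n) (Fin n) ℝ)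
    (hd : Fin N → Fin m → ℝ)
    (B : Fin N → ℝ → Matrix (Fin n) (Fin n) ℝ) : Prop :=
  ∃ M > (0:ℝ), ∃ α > (0:ℝ), ∀ σ : ℝ → Fin N, IsSwitchingSignal σ →
    ∀ φ x, IsSolutionD h σ A0 A hd B φ x →
      ∀ t ≥ (0:ℝ), ‖x t‖ ≤ M * Real.exp (-α * t) * ‖φ‖

/-- `x` is a solution of the (non-switched) system with discrete delays `hd` and
distributed delay kernel `B`, with initial function `φ`. -/
def IsSolutionD1 (h : ℝ) {n m : ℕ}
    (A0 : Matrix (Fin n) (Fin n) ℝ)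
    (A : Fin m → Matrix (Fin n) (Fin n) ℝ)
    (hd : Fin m → ℝ)
    (B : ℝ → Matrix (Fin n) (Fin n) ℝ)
    (φ : C(Set.Icc (-h) (0:ℝ), Fin n → ℝ)) (x : ℝ → Fin n → ℝ) : Prop :=
  ContinuousOn x (Set.Ici (-h)) ∧
  (∀ θ : Set.Icc (-h) (0:ℝ), x (θ : ℝ) = φ θ) ∧
  ∀ t : ℝ, 0 ≤ t → ∀ i,
    HasDerivWithinAt (fun s => x s i)
      ((∑ j, A0 i j * x t j) + (∑ l, ∑ j, A l i j * x (t - hd l) j) +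
        ∑ j, ∫ θ in (-h)..(0:ℝ), B θ i j * x (t + θ) j)
      (Set.Ici t) t

/-- Exponential stability of a single (non-switched) system with discrete and
distributed delays. -/
def ExpStableD1 (h : ℝ) {n m : ℕ}
    (A0 : Matrix (Fin n) (Fin n) ℝ)
    (A : Fin m → Matrix (Fin n) (Fin n) ℝ)
    (hd : Fin m → ℝ)
    (B : ℝ → Matrix (Fin n) (Fin n) ℝ) : Prop :=
  ∃ M > (0:ℝ), ∃ α > (0:ℝ), ∀ φ x, IsSolutionD1 h A0 A hd B φ x →
    ∀ t ≥ (0:ℝ), ‖x t‖ ≤ M * Real.exp (-α * t) * ‖φ‖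

set_option maxHeartbeats 2000000 in
/-- Corollary 2: if there is `ξ ≫ 0` with
`(M(A⁰_k) + Σ_l |A^l_k| + ∫_{-h}^0 |B_k(s)| ds) ξ ≪ 0` for every `k`, then the switched
linear system with discrete delays `h^l_k ∈ (0, h]` and distributed delay kernel `B_k` is
exponentially stable under arbitrary switching. -/
theorem expStableSwD_of_common_LCLF {N n m : ℕ} (h : ℝ) (hh : 0 < h)
    (A0 : Fin N → Matrix (Fin n) (Fin n) ℝ)
    (A : Fin N → Fin m → Matrix (Fin n) (Fin n) ℝ)
    (hd : Fin N → Fin m → ℝ)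
    (hdpos : ∀ k l, 0 < hd k l) (hdle : ∀ k l, hd k l ≤ h)
    (hdmono : ∀ k, Monotone (hd k))
    (B : Fin N → ℝ → Matrix (Fin n) (Fin n) ℝ)
    (hBcont : ∀ k i j, ContinuousOn (fun θ => B k θ i j) (Set.Icc (-h) 0))
    (ξ : Fin n → ℝ) (hξ : ∀ i, 0 < ξ i)
    (hLCLF : ∀ k, ∀ i,
      ((metz (A0 k) + (∑ l, Matrix.of fun a b => |A k l a b|) +
          Matrix.of fun a b => ∫ s in (-h)..(0:ℝ), |B k s a b|).mulVec ξ) i < 0) :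
    ExpStableSwD h A0 A hd B := by
  rcases Nat.eq_zero_or_pos N with hN | hN
  · refine ⟨1, one_pos, 1, one_pos, fun σ _ => ?_⟩
    subst hN; exact (σ 0).elim0
  rcases Nat.eq_zero_or_pos n with hn | hn
  · refine ⟨1, one_pos, 1, one_pos, fun σ _ φ x _ t ht => ?_⟩
    subst hn
    have hx0 : x t = 0 := Subsingleton.elim _ _
    rw [hx0, norm_zero]
    positivity
  haveI : Nonempty (Fin n) := ⟨⟨0, hn⟩⟩
  haveI : Nonempty (Fin N) := ⟨⟨0, hN⟩⟩
  have hh0 : (-h : ℝ) ≤ 0 := by linarith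
  set xm : ℝ := Finset.univ.inf' Finset.univ_nonempty ξ with hxm_def
  set X : ℝ := Finset.univ.sup' Finset.univ_nonempty ξ with hX_def
  have hxm_pos : 0 < xm := (Finset.lt_inf'_iff _).mpr fun i _ => hξ i
  have hxm_le : ∀ i, xm ≤ ξ i := fun i => Finset.inf'_le _ (Finset.mem_univ i)
  have hle_X : ∀ i, ξ i ≤ X := fun i => Finset.le_sup' _ (Finset.mem_univ i)
  have hX_pos : 0 < X := lt_of_lt_of_le (hξ (Classical.arbitrary _)) (hle_X _)
  set r0 : Fin N → Fin n → ℝ := fun k i => ∑ j, metz (A0 k) i j * ξ j with hr0_def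
  set rd : Fin N → Fin n → ℝ := fun k i =>
    (∑ l, ∑ j, |A k l i j| * ξ j) + ∑ j, (∫ s in (-h)..(0:ℝ), |B k s i j|) * ξ j with hrd_def
  have hsum : ∀ k i, r0 k i + rd k i < 0 := by
    intro k i
    have hl := hLCLF k i
    have hexp : ((metz (A0 k) + (∑ l, Matrix.of fun a b => |A k l a b|) +
          Matrix.of fun a b => ∫ s in (-h)..(0:ℝ), |B k s a b|).mulVec ξ) i
        = r0 k i + rd k i := by
      simp only [hr0_def, hrd_def, Matrix.mulVec, dotProduct, Matrix.add_apply,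
        Matrix.sum_apply, Matrix.of_apply, add_mul, Finset.sum_add_distrib, Finset.sum_mul]
      rw [Finset.sum_comm]
      ring
    rwa [hexp] at hl
  have hrd_nonneg : ∀ k i, 0 ≤ rd k i := by
    intro k i
    simp only [hrd_def]
    have h1 : (0:ℝ) ≤ ∑ l, ∑ j, |A k l i j| * ξ j :=
      Finset.sum_nonneg fun l _ => Finset.sum_nonneg fun j _ =>
        mul_nonneg (abs_nonneg _) (hξ j).le
    have h2 : (0:ℝ) ≤ ∑ j, (∫ s in (-h)..(0:ℝ), |B k s i j|) * ξ j := by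
      refine Finset.sum_nonneg fun j _ => mul_nonneg ?_ (hξ j).le
      exact intervalIntegral.integral_nonneg (by linarith) fun u _ => abs_nonneg _
    linarith
  set c0 : ℝ := Finset.univ.inf' Finset.univ_nonempty
      (fun p : Fin N × Fin n => -(r0 p.1 p.2 + rd p.1 p.2)) with hc0_def
  have hc0_pos : 0 < c0 := (Finset.lt_inf'_iff _).mpr fun p _ => by
    have := hsum p.1 p.2; linarith
  have hc0_le : ∀ k i, r0 k i + rd k i ≤ -c0 := by
    intro k i
    have h1 := Finset.inf'_le (fun p : Fin N × Fin n => -(r0 p.1 p.2 + rd p.1 p.2))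
      (Finset.mem_univ (k, i))
    rw [← hc0_def] at h1
    linarith
  set R : ℝ := Finset.univ.sup' Finset.univ_nonempty
      (fun p : Fin N × Fin n => rd p.1 p.2) with hR_def
  have hrd_le_R : ∀ k i, rd k i ≤ R := fun k i =>
    Finset.le_sup' (fun p : Fin N × Fin n => rd p.1 p.2) (Finset.mem_univ (k, i))
  have hR0 : 0 ≤ R := le_trans (hrd_nonneg (Classical.arbitrary _) (Classical.arbitrary _))
    (hrd_le_R _ _)
  obtain ⟨α, hα_pos, hα⟩ : ∃ α : ℝ, 0 < α ∧ (Real.exp (α * h) - 1) * R + α * X < c0 := by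
    have hfc : Continuous fun a : ℝ => (Real.exp (a * h) - 1) * R + a * X := by fun_prop
    have h0 : (Real.exp ((0:ℝ) * h) - 1) * R + 0 * X < c0 := by simpa using hc0_pos
    have hev : ∀ᶠ a in nhds (0:ℝ), (Real.exp (a * h) - 1) * R + a * X < c0 :=
      (hfc.tendsto 0).eventually (eventually_lt_nhds h0)
    have hev2 : ∀ᶠ a in nhdsWithin (0:ℝ) (Ioi 0),
        ((Real.exp (a * h) - 1) * R + a * X < c0) ∧ a ∈ Ioi (0:ℝ) :=
      (hev.filter_mono nhdsWithin_le_nhds).and eventually_mem_nhdsWithin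
    obtain ⟨a, ha1, ha2⟩ := hev2.exists
    exact ⟨a, ha2, ha1⟩
  set μ : ℝ := c0 - ((Real.exp (α * h) - 1) * R + α * X) with hμ_def
  have hμ_pos : 0 < μ := by rw [hμ_def]; linarith
  have hexp1 : (1:ℝ) ≤ Real.exp (α * h) := Real.one_le_exp (mul_pos hα_pos hh).le
  have hkey : ∀ k i, r0 k i + Real.exp (α * h) * rd k i ≤ -μ - α * ξ i := by
    intro k i
    have h1 : (Real.exp (α * h) - 1) * rd k i ≤ (Real.exp (α * h) - 1) * R :=
      mul_le_mul_of_nonneg_left (hrd_le_R k i) (by linarith)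
    have h2 := hc0_le k i
    have h3 : α * ξ i ≤ α * X := mul_le_mul_of_nonneg_left (hle_X i) hα_pos.le
    have h4 : Real.exp (α * h) * rd k i
        = rd k i + (Real.exp (α * h) - 1) * rd k i := by ring
    rw [hμ_def]
    linarith
  refine ⟨X / xm, div_pos hX_pos hxm_pos, α, hα_pos, ?_⟩
  rintro σ ⟨hσ0, d, hd_pos, τ, hτ0, hτd, hτc⟩ φ x ⟨hxC, hxinit, hode⟩ t ht
  -- extended continuous versions of `x` and `B`
  set xc : ℝ → Fin n → ℝ := fun s => x (max s (-h)) with hxc_def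
  have hxcC : Continuous xc :=
    hxC.comp_continuous (continuous_id.max continuous_const) fun s => mem_Ici.mpr (le_max_right _ _)
  have hxc_eq : ∀ s, -h ≤ s → xc s = x s := fun s hs => by
    simp only [hxc_def, max_eq_left hs]
  have hxcCj : ∀ j' : Fin n, Continuous fun s => xc s j' :=
    fun j' => (continuous_apply j').comp hxcC
  set Bc : Fin N → Fin n → Fin n → ℝ → ℝ := fun k i j =>
    Set.IccExtend hh0 (fun θ : Icc (-h) (0:ℝ) => B k θ i j) with hBc_def
  have hBcC : ∀ k i j, Continuous (Bc k i j) := fun k i j =>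
    (continuousOn_iff_continuous_restrict.mp (hBcont k i j)).Icc_extend'
  have hBc_eq : ∀ k i j θ, θ ∈ Icc (-h) (0:ℝ) → Bc k i j θ = B k θ i j := by
    intro k i j θ hθ
    simp only [hBc_def]
    exact Set.IccExtend_of_mem hh0 _ hθ
  have hφbound : ∀ s, s ∈ Icc (-h) (0:ℝ) → ∀ i, |x s i| ≤ ‖φ‖ := by
    intro s hs i
    have h1 := hxinit ⟨s, hs⟩
    have h2 : |x s i| = ‖x s i‖ := (Real.norm_eq_abs _).symm
    rw [h2, h1]
    exact (norm_le_pi_norm (φ ⟨s, hs⟩) i).trans (φ.norm_coe_le_norm _)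
  have hτlow : ∀ k : ℕ, d * k ≤ τ k := by
    intro k
    induction k with
    | zero => simp [hτ0]
    | succ k ih =>
      have h1 := hτd k
      push_cast
      linarith
  -- the core comparison lemma
  have main : ∀ C : ℝ, 0 < C → (∀ s ∈ Icc (-h) (0:ℝ), ∀ i, |x s i| ≤ C * ξ i) →
      ∀ u, -h ≤ u → ∀ i, |x u i| ≤ C * ξ i * Real.exp (-α * u) := by
    intro C hCpos hC0
    by_contra hcon
    push_neg at hcon
    set E : Set ℝ := {u | -h ≤ u ∧ ∃ i, C * ξ i * Real.exp (-α * u) < |x u i|} with hE_def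
    have hmemE : ∀ u, u ∈ E ↔ (-h ≤ u ∧ ∃ i, C * ξ i * Real.exp (-α * u) < |x u i|) := by
      intro u
      rw [hE_def]
      exact Iff.rfl
    have hEne : E.Nonempty := by
      obtain ⟨u, hu1, i, hui⟩ := hcon
      exact ⟨u, (hmemE u).mpr ⟨hu1, i, hui⟩⟩
    have hEbdd : BddBelow E := ⟨-h, fun u hu => ((hmemE u).mp hu).1⟩
    set T : ℝ := sInf E with hT_def
    have hinit' : ∀ s ∈ Icc (-h) (0:ℝ), ∀ i, |x s i| ≤ C * ξ i * Real.exp (-α * s) := by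
      intro s hs i
      refine (hC0 s hs i).trans ?_
      have h1 : (1:ℝ) ≤ Real.exp (-α * s) := Real.one_le_exp (by
        have h0 : 0 ≤ α * (-s) := mul_nonneg hα_pos.le (neg_nonneg.mpr hs.2)
        linarith)
      have h2 : (C * ξ i) * 1 ≤ (C * ξ i) * Real.exp (-α * s) :=
        mul_le_mul_of_nonneg_left h1 (mul_pos hCpos (hξ i)).le
      linarith
    have hEpos : ∀ u ∈ E, 0 < u := by
      intro u hu
      obtain ⟨hu1, i, hui⟩ := (hmemE u).mp hu
      by_contra hneg
      push_neg at hneg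
      exact absurd (hinit' u ⟨hu1, hneg⟩ i) (not_le.mpr hui)
    have hT0 : 0 ≤ T := le_csInf hEne fun u hu => (hEpos u hu).le
    have hTnh : -h < T := by linarith
    have hbddlt : ∀ s, -h ≤ s → s < T → ∀ i, |x s i| ≤ C * ξ i * Real.exp (-α * s) := by
      intro s hs1 hs2 i
      by_contra hgt
      push_neg at hgt
      exact absurd (csInf_le hEbdd ((hmemE s).mpr ⟨hs1, i, hgt⟩)) (not_le.mpr hs2)
    have hbddT : ∀ s, -h ≤ s → s ≤ T → ∀ i, |x s i| ≤ C * ξ i * Real.exp (-α * s) := by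
      intro s hs1 hs2 i
      rcases lt_or_eq_of_le hs2 with hlt | heqs
      · exact hbddlt s hs1 hlt i
      · subst heqs
        have h1 : ContinuousWithinAt x (Ici (-h)) T := hxC T (mem_Ici.mpr (by linarith))
        have h2 : ContinuousWithinAt x (Iio T) T :=
          h1.mono_of_mem_nhdsWithin (mem_of_superset
            (Ioo_mem_nhdsLT_of_mem ⟨by linarith, le_refl T⟩) fun u hu => hu.1.le)
        have hcw : ContinuousWithinAt
            (fun u => |x u i| - C * ξ i * Real.exp (-α * u)) (Iio T) T := by
          apply ContinuousWithinAt.sub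
          · exact continuous_abs.continuousAt.comp_continuousWithinAt
              ((continuous_apply i).continuousAt.comp_continuousWithinAt h2)
          · exact Continuous.continuousWithinAt (by fun_prop)
        have hev : ∀ᶠ u in nhdsWithin T (Iio T),
            |x u i| - C * ξ i * Real.exp (-α * u) ≤ 0 := by
          filter_upwards [Ioo_mem_nhdsLT_of_mem (⟨by linarith, le_refl T⟩ : T ∈ Ioc (-h) T)]
            with u hu
          have := hbddlt u hu.1.le hu.2 i
          linarith
        have hfin : |x T i| - C * ξ i * Real.exp (-α * T) ≤ 0 := le_of_tendsto hcw hev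
        linarith
    have hTnE : T ∉ E := by
      intro hT
      obtain ⟨h1, i, hi⟩ := (hmemE T).mp hT
      exact absurd (hbddT T hTnh.le le_rfl i) (not_le.mpr hi)
    have hTlt : ∀ u ∈ E, T < u := by
      intro u hu
      rcases lt_or_eq_of_le (csInf_le hEbdd hu) with h1 | h1
      · exact h1
      · rw [← h1] at hu
        exact absurd hu hTnE
    -- pigeonhole: fix a component and a sign
    have hfreq : ∃ (iX : Fin n) (sg : ℝ), (sg = 1 ∨ sg = -1) ∧
        ∀ δ > (0:ℝ), ∃ u, T < u ∧ u < T + δ ∧ C * ξ iX * Real.exp (-α * u) < sg * x u iX := by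
      by_contra hno
      push_neg at hno
      have hch : ∀ p : Fin n × Bool, ∃ δ, 0 < δ ∧ ∀ u, T < u → u < T + δ →
          (cond p.2 (1:ℝ) (-1)) * x u p.1 ≤ C * ξ p.1 * Real.exp (-α * u) := by
        intro p
        obtain ⟨δ, hδ, h2⟩ := hno p.1 (cond p.2 (1:ℝ) (-1)) (by cases p.2 <;> simp)
        exact ⟨δ, hδ, fun u hu1 hu2 => h2 u hu1 hu2⟩
      choose δf hδf hbnd using hch
      have hne : (Finset.univ : Finset (Fin n × Bool)).Nonempty := Finset.univ_nonempty
      set δm : ℝ := Finset.univ.inf' hne δf with hδm_def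
      have hδm : 0 < δm := (Finset.lt_inf'_iff _).mpr fun p _ => hδf p
      obtain ⟨u, huE, hu2⟩ := exists_lt_of_csInf_lt hEne
        (show sInf E < T + δm by rw [← hT_def]; linarith)
      obtain ⟨hu1, i, hui⟩ := (hmemE u).mp huE
      have hTu : T < u := hTlt u huE
      rcases lt_abs.mp hui with hpos | hneg
      · have hle := Finset.inf'_le δf (Finset.mem_univ (i, true))
        rw [← hδm_def] at hle
        have hb := hbnd (i, true) u hTu (by linarith)
        simp only [cond_true] at hb
        linarith
      · have hle := Finset.inf'_le δf (Finset.mem_univ (i, false))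
        rw [← hδm_def] at hle
        have hb := hbnd (i, false) u hTu (by linarith)
        simp only [cond_false] at hb
        linarith
    obtain ⟨iX, sg, hsg, hviolseq⟩ := hfreq
    have hsg_abs : ∀ y : ℝ, sg * y ≤ |y| := by
      intro y
      rcases hsg with rfl | rfl
      · rw [one_mul]; exact le_abs_self y
      · rw [neg_one_mul]; exact neg_le_abs y
    have hsgmul : ∀ a y : ℝ, sg * (a * y) ≤ |a| * |y| := by
      intro a y
      have h1 := hsg_abs (a * y)
      rwa [abs_mul] at h1
    set E₀ : ℝ := Real.exp (-α * T) with hE₀_def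
    have hE₀pos : 0 < E₀ := Real.exp_pos _
    have heq : sg * x T iX = C * ξ iX * E₀ := by
      have h9 := hbddT T hTnh.le le_rfl iX
      rw [← hE₀_def] at h9
      refine le_antisymm ((hsg_abs _).trans h9) ?_
      by_contra hlt
      push_neg at hlt
      have h1 : ContinuousWithinAt x (Ici (-h)) T := hxC T (mem_Ici.mpr (by linarith))
      have h2 : ContinuousWithinAt x (Ici T) T :=
        h1.mono (Ici_subset_Ici.mpr (by linarith))
      have hcw : ContinuousWithinAt
          (fun u => C * ξ iX * Real.exp (-α * u) - sg * x u iX) (Ici T) T := by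
        apply ContinuousWithinAt.sub
        · exact Continuous.continuousWithinAt (by fun_prop)
        · exact continuousWithinAt_const.mul
            ((continuous_apply iX).continuousAt.comp_continuousWithinAt h2)
      have hgT : 0 < C * ξ iX * Real.exp (-α * T) - sg * x T iX := by
        rw [← hE₀_def]
        linarith
      have hev : ∀ᶠ u in nhdsWithin T (Ici T),
          0 < C * ξ iX * Real.exp (-α * u) - sg * x u iX :=
        hcw.eventually (eventually_gt_nhds hgT)
      obtain ⟨w, hw, hsub⟩ := mem_nhdsGE_iff_exists_Ico_subset.mp hev
      have hw' : T < w := hw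
      obtain ⟨u, hu1, hu2, hu3⟩ := hviolseq (w - T) (by linarith)
      have hmem : u ∈ Ico T w := ⟨hu1.le, by linarith⟩
      have h5 := hsub hmem
      simp only [mem_setOf_eq] at h5
      linarith
    -- locate the switching interval around T
    have hex : ∃ k : ℕ, T < τ k := by
      obtain ⟨k, hk⟩ := exists_nat_gt (T / d)
      refine ⟨k, lt_of_lt_of_le ?_ (hτlow k)⟩
      rw [div_lt_iff₀ hd_pos] at hk
      linarith
    have hKspec := Nat.find_spec hex
    have hK0 : Nat.find hex ≠ 0 := by
      intro h0
      rw [h0, hτ0] at hKspec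
      exact absurd hKspec (not_lt.mpr hT0)
    set j : ℕ := Nat.find hex - 1 with hj_def
    have hjK : j + 1 = Nat.find hex := Nat.succ_pred_eq_of_ne_zero hK0
    have hτjT : τ j ≤ T := not_lt.mp (Nat.find_min hex (by omega))
    have hTb : T < τ (j + 1) := by rw [hjK]; exact hKspec
    have hσc : ∀ s, τ j ≤ s → s < τ (j + 1) → σ s = σ T := by
      intro s h1 h2
      rw [hτc j s (mem_Ico.mpr ⟨h1, h2⟩), hτc j T (mem_Ico.mpr ⟨hτjT, hTb⟩)]
    set k₀ : Fin N := σ T with hk₀_def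
    set F : ℝ → ℝ := fun u => (∑ j', A0 k₀ iX j' * xc u j') +
        (∑ l, ∑ j', A k₀ l iX j' * xc (u - hd k₀ l) j') +
        ∑ j', ∫ θ in (-h)..(0:ℝ), Bc k₀ iX j' θ * xc (u + θ) j' with hF_def
    have hFc : Continuous F := by
      simp only [hF_def]
      refine Continuous.add (Continuous.add ?_ ?_) ?_
      · exact continuous_finset_sum _ fun j' _ => continuous_const.mul (hxcCj j')
      · exact continuous_finset_sum _ fun l _ => continuous_finset_sum _ fun j' _ =>
          continuous_const.mul ((hxcCj j').comp (continuous_id.sub continuous_const))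
      · refine continuous_finset_sum _ fun j' _ => ?_
        have hcj : Continuous (Function.uncurry fun (u θ : ℝ) => Bc k₀ iX j' θ * xc (u + θ) j') :=
          ((hBcC k₀ iX j').comp continuous_snd).mul
            ((hxcCj j').comp (continuous_fst.add continuous_snd))
        exact intervalIntegral.continuous_parametric_intervalIntegral_of_continuous' hcj _ _
    have hFode : ∀ u, T < u → u < τ (j + 1) →
        HasDerivWithinAt (fun s => sg * x s iX) (sg * F u) (Ici u) u := by
      intro u hu1 hu2
      have hu0 : (0:ℝ) ≤ u := le_of_lt (lt_of_le_of_lt hT0 hu1)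
      have hevs : ∀ᶠ s in nhds u, σ s = σ u := by
        have hmem : u ∈ Ioo (τ j) (τ (j + 1)) := mem_Ioo.mpr ⟨lt_of_le_of_lt hτjT hu1, hu2⟩
        filter_upwards [isOpen_Ioo.mem_nhds hmem] with s hs
        rw [hσc s hs.1.le hs.2, hσc u hmem.1.le hu2]
      have hd0 := hode u hu0 hevs iX
      have hσu : σ u = k₀ := by rw [hk₀_def]; exact hσc u (hτjT.trans hu1.le) hu2
      rw [hσu] at hd0
      have hval : ((∑ j', A0 k₀ iX j' * x u j') +
          (∑ l, ∑ j', A k₀ l iX j' * x (u - hd k₀ l) j') +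
          ∑ j', ∫ θ in (-h)..(0:ℝ), B k₀ θ iX j' * x (u + θ) j') = F u := by
        simp only [hF_def]
        congr 1
        · congr 1
          · exact Finset.sum_congr rfl fun j' _ => by rw [hxc_eq u (by linarith)]
          · refine Finset.sum_congr rfl fun l _ => Finset.sum_congr rfl fun j' _ => ?_
            rw [hxc_eq _ (by have h1 := hdle k₀ l; linarith)]
        · refine Finset.sum_congr rfl fun j' _ => intervalIntegral.integral_congr ?_
          intro θ hθ
          rw [Set.uIcc_of_le hh0] at hθ
          show B k₀ θ iX j' * x (u + θ) j' = Bc k₀ iX j' θ * xc (u + θ) j'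
          rw [hBc_eq k₀ iX j' θ hθ, hxc_eq _ (by have h1 := hθ.1; linarith)]
      rw [hval] at hd0
      exact hd0.const_mul sg
    -- the key strict estimate at T
    have hhist : ∀ s, -h ≤ s → s ≤ T → ∀ j', |x s j'| ≤ C * ξ j' * Real.exp (-α * s) := hbddT
    have hexpb : ∀ s, T - h ≤ s → Real.exp (-α * s) ≤ E₀ * Real.exp (α * h) := by
      intro s hs
      rw [hE₀_def, ← Real.exp_add]
      apply Real.exp_le_exp.mpr
      have h0 : α * (T - h) ≤ α * s := mul_le_mul_of_nonneg_left hs hα_pos.le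
      linarith
    have ht1 : sg * (∑ j', A0 k₀ iX j' * xc T j') ≤ (C * E₀) * r0 k₀ iX := by
      rw [Finset.mul_sum]
      have hre : (C * E₀) * r0 k₀ iX = ∑ j', metz (A0 k₀) iX j' * (C * ξ j' * E₀) := by
        simp only [hr0_def, Finset.mul_sum]
        exact Finset.sum_congr rfl fun j' _ => by ring
      rw [hre]
      refine Finset.sum_le_sum fun j' _ => ?_
      rw [hxc_eq T hTnh.le]
      by_cases hji : iX = j'
      · subst hji
        have h1 : sg * (A0 k₀ iX iX * x T iX) = A0 k₀ iX iX * (sg * x T iX) := by ring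
        rw [h1, heq]
        simp [metz]
      · have h1 : sg * (A0 k₀ iX j' * x T j') ≤ |A0 k₀ iX j'| * |x T j'| := hsgmul _ _
        have h2 : |x T j'| ≤ C * ξ j' * E₀ := by
          have h3 := hbddT T hTnh.le le_rfl j'
          rwa [← hE₀_def] at h3
        have h3 : |A0 k₀ iX j'| * |x T j'| ≤ |A0 k₀ iX j'| * (C * ξ j' * E₀) :=
          mul_le_mul_of_nonneg_left h2 (abs_nonneg _)
        have h4 : metz (A0 k₀) iX j' = |A0 k₀ iX j'| := by simp [metz, hji]
        rw [h4]
        linarith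
    have ht2 : sg * (∑ l, ∑ j', A k₀ l iX j' * xc (T - hd k₀ l) j')
        ≤ (C * E₀ * Real.exp (α * h)) * (∑ l, ∑ j', |A k₀ l iX j'| * ξ j') := by
      rw [Finset.mul_sum, Finset.mul_sum]
      refine Finset.sum_le_sum fun l _ => ?_
      rw [Finset.mul_sum, Finset.mul_sum]
      refine Finset.sum_le_sum fun j' _ => ?_
      have hdl1 : -h ≤ T - hd k₀ l := by have := hdle k₀ l; linarith
      have hdl2 : T - hd k₀ l ≤ T := by have := hdpos k₀ l; linarith
      rw [hxc_eq _ hdl1]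
      have h1 := hsgmul (A k₀ l iX j') (x (T - hd k₀ l) j')
      have h2 := hhist _ hdl1 hdl2 j'
      have h3 : Real.exp (-α * (T - hd k₀ l)) ≤ E₀ * Real.exp (α * h) :=
        hexpb _ (by have := hdle k₀ l; linarith)
      have h4 : 0 ≤ |A k₀ l iX j'| * (C * ξ j') :=
        mul_nonneg (abs_nonneg _) (mul_pos hCpos (hξ j')).le
      have h5 := mul_le_mul_of_nonneg_left h3 h4
      have h6 : 0 ≤ |A k₀ l iX j'| := abs_nonneg _
      have h7 := mul_le_mul_of_nonneg_left h2 h6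
      calc sg * (A k₀ l iX j' * x (T - hd k₀ l) j')
          ≤ |A k₀ l iX j'| * |x (T - hd k₀ l) j'| := h1
        _ ≤ |A k₀ l iX j'| * (C * ξ j' * Real.exp (-α * (T - hd k₀ l))) := h7
        _ ≤ (C * E₀ * Real.exp (α * h)) * (|A k₀ l iX j'| * ξ j') := by linarith [h5]
    have ht3 : sg * (∑ j', ∫ θ in (-h)..(0:ℝ), Bc k₀ iX j' θ * xc (T + θ) j')
        ≤ (C * E₀ * Real.exp (α * h)) *
          (∑ j', (∫ s in (-h)..(0:ℝ), |B k₀ s iX j'|) * ξ j') := by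
      rw [Finset.mul_sum, Finset.mul_sum]
      refine Finset.sum_le_sum fun j' _ => ?_
      have hIeq : (∫ s in (-h)..(0:ℝ), |B k₀ s iX j'|)
          = ∫ s in (-h)..(0:ℝ), |Bc k₀ iX j' s| := by
        apply intervalIntegral.integral_congr
        intro θ hθ
        rw [Set.uIcc_of_le hh0] at hθ
        show |B k₀ θ iX j'| = |Bc k₀ iX j' θ|
        rw [hBc_eq k₀ iX j' θ hθ]
      rw [hIeq]
      rw [← intervalIntegral.integral_const_mul]
      have hrhs : (C * E₀ * Real.exp (α * h)) * ((∫ s in (-h)..(0:ℝ), |Bc k₀ iX j' s|) * ξ j')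
          = ∫ s in (-h)..(0:ℝ), |Bc k₀ iX j' s| * (C * E₀ * Real.exp (α * h) * ξ j') := by
        rw [intervalIntegral.integral_mul_const]
        ring
      rw [hrhs]
      refine intervalIntegral.integral_mono_on (by linarith) ?_ ?_ ?_
      · exact (continuous_const.mul ((hBcC k₀ iX j').mul
          ((hxcCj j').comp (continuous_const.add continuous_id)))).intervalIntegrable _ _
      · exact (((hBcC k₀ iX j').abs).mul continuous_const).intervalIntegrable _ _
      · intro θ hθ
        have hθ1 : -h ≤ T + θ := by have := hθ.1; linarith
        have hθ2 : T + θ ≤ T := by have := hθ.2; linarith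
        rw [hxc_eq _ hθ1]
        have h1 := hsgmul (Bc k₀ iX j' θ) (x (T + θ) j')
        have h2 := hhist _ hθ1 hθ2 j'
        have h3 : Real.exp (-α * (T + θ)) ≤ E₀ * Real.exp (α * h) :=
          hexpb _ (by have := hθ.1; linarith)
        have h4 : 0 ≤ |Bc k₀ iX j' θ| := abs_nonneg _
        have h7 := mul_le_mul_of_nonneg_left h2 h4
        have h5 : 0 ≤ |Bc k₀ iX j' θ| * (C * ξ j') :=
          mul_nonneg (abs_nonneg _) (mul_pos hCpos (hξ j')).le
        have h6 := mul_le_mul_of_nonneg_left h3 h5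
        calc sg * (Bc k₀ iX j' θ * x (T + θ) j')
            ≤ |Bc k₀ iX j' θ| * |x (T + θ) j'| := h1
          _ ≤ |Bc k₀ iX j' θ| * (C * ξ j' * Real.exp (-α * (T + θ))) := h7
          _ ≤ |Bc k₀ iX j' θ| * (C * E₀ * Real.exp (α * h) * ξ j') := by linarith [h6]
    have hFT : sg * F T ≤ (C * E₀) * (r0 k₀ iX + Real.exp (α * h) * rd k₀ iX) := by
      have hsplit : sg * F T = sg * (∑ j', A0 k₀ iX j' * xc T j') +
          sg * (∑ l, ∑ j', A k₀ l iX j' * xc (T - hd k₀ l) j') +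
          sg * (∑ j', ∫ θ in (-h)..(0:ℝ), Bc k₀ iX j' θ * xc (T + θ) j') := by
        simp only [hF_def]
        ring
      have hrhseq : (C * E₀) * (r0 k₀ iX + Real.exp (α * h) * rd k₀ iX) =
          (C * E₀) * r0 k₀ iX +
          ((C * E₀ * Real.exp (α * h)) * (∑ l, ∑ j', |A k₀ l iX j'| * ξ j') +
           (C * E₀ * Real.exp (α * h)) *
             (∑ j', (∫ s in (-h)..(0:ℝ), |B k₀ s iX j'|) * ξ j')) := by
        simp only [hrd_def]
        ring
      rw [hsplit, hrhseq]
      linarith [ht1, ht2, ht3]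
    have hk := hkey k₀ iX
    have hWpos : 0 < C * ξ iX * E₀ := mul_pos (mul_pos hCpos (hξ iX)) hE₀pos
    have hFT2 : sg * F T ≤ -(α * (C * ξ iX * E₀)) - C * E₀ * μ := by
      have h2 : (C * E₀) * (r0 k₀ iX + Real.exp (α * h) * rd k₀ iX)
          ≤ (C * E₀) * (-μ - α * ξ iX) :=
        mul_le_mul_of_nonneg_left hk (mul_pos hCpos hE₀pos).le
      have h3 : (C * E₀) * (-μ - α * ξ iX) = -(α * (C * ξ iX * E₀)) - C * E₀ * μ := by ring
      linarith
    have hCEμ : 0 < C * E₀ * μ := mul_pos (mul_pos hCpos hE₀pos) hμ_pos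
    set γ : ℝ := α * (C * ξ iX * E₀) + C * E₀ * μ / 2 with hγ_def
    have hγlt : sg * F T < -γ := by
      rw [hγ_def]
      clear_value F γ E₀ μ T
      linarith only [hFT2, hCEμ]
    have hevF : ∀ᶠ u in nhds T, sg * F u < -γ :=
      ((continuous_const.mul hFc).tendsto T).eventually (eventually_lt_nhds hγlt)
    obtain ⟨δ₁, hδ₁pos, hδ₁⟩ := Metric.eventually_nhds_iff.mp hevF
    set δ : ℝ := min (δ₁ / 2) ((τ (j + 1) - T) / 2) with hδ_def
    have hδpos : 0 < δ := lt_min (by linarith) (by linarith)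
    obtain ⟨t', ht'1, ht'2, ht'3⟩ := hviolseq δ hδpos
    have hδb : δ ≤ (τ (j + 1) - T) / 2 := min_le_right _ _
    have hδδ₁ : δ ≤ δ₁ / 2 := min_le_left _ _
    have ht'b : t' < τ (j + 1) := by linarith
    have ht'δ₁ : t' < T + δ₁ := by linarith
    have hcomp : ∀ a', T < a' → a' < t' →
        sg * x t' iX ≤ sg * x a' iX + (-γ) * (t' - a') := by
      intro a' ha1 ha2
      have hsubs : Icc a' t' ⊆ Ici (-h) := fun s hs => by
        simp only [mem_Ici]
        have := hs.1
        linarith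
      have hfcc : ContinuousOn (fun s => sg * x s iX) (Icc a' t') := fun s hs =>
        continuousWithinAt_const.mul
          ((continuous_apply iX).continuousAt.comp_continuousWithinAt
            ((hxC.mono hsubs) s hs))
      have hres := image_le_of_deriv_right_le_deriv_boundary (f := fun s => sg * x s iX)
        (f' := fun u => sg * F u) (a := a') (b := t')
        (B := fun u => sg * x a' iX + (-γ) * (u - a')) (B' := fun _ => -γ)
        hfcc
        (fun u hu => hFode u (lt_of_lt_of_le ha1 hu.1) (lt_trans hu.2 ht'b))
        (by simp)
        (by fun_prop)
        (fun u hu => by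
          have hB : HasDerivWithinAt (fun v => sg * x a' iX + (-γ) * (v - a'))
              ((-γ) * 1) (Ici u) u :=
            (((hasDerivWithinAt_id u (Ici u)).sub_const a').const_mul (-γ)).const_add _
          simpa using hB)
        (fun u hu => le_of_lt (hδ₁ (show dist u T < δ₁ by
          rw [Real.dist_eq, abs_of_pos (show (0:ℝ) < u - T by
            have := hu.1
            linarith)]
          have := hu.2
          linarith)))
      exact hres (right_mem_Icc.mpr ha2.le)
    have hlim : sg * x t' iX ≤ sg * x T iX + (-γ) * (t' - T) := by
      have h1 : ContinuousWithinAt x (Ici (-h)) T := hxC T (mem_Ici.mpr (by linarith))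
      have h2 : ContinuousWithinAt x (Ioi T) T := h1.mono fun s hs => by
        simp only [mem_Ici]
        have h3 : T < s := hs
        linarith
      have htd : Tendsto (fun a' => sg * x a' iX + (-γ) * (t' - a'))
          (nhdsWithin T (Ioi T)) (nhds (sg * x T iX + (-γ) * (t' - T))) := by
        apply Tendsto.add
        · exact continuousWithinAt_const.mul
            ((continuous_apply iX).continuousAt.comp_continuousWithinAt h2)
        · exact ((continuous_const.mul
            (continuous_const.sub continuous_id)).continuousAt).continuousWithinAt
      refine ge_of_tendsto htd ?_
      filter_upwards [Ioo_mem_nhdsGT_of_mem (⟨le_refl T, ht'1⟩ : T ∈ Ico T t')] with a' ha'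
      exact hcomp a' ha'.1 ha'.2
    have hexpeq : Real.exp (-α * t') = E₀ * Real.exp (-α * (t' - T)) := by
      rw [hE₀_def, ← Real.exp_add]
      congr 1
      ring
    have h2' : 1 + (-α * (t' - T)) ≤ Real.exp (-α * (t' - T)) :=
      by linarith [Real.add_one_le_exp (-α * (t' - T))]
    have hP : C * ξ iX * E₀ * (1 - α * (t' - T)) ≤ C * ξ iX * Real.exp (-α * t') := by
      rw [hexpeq]
      have h3 := mul_le_mul_of_nonneg_left h2' hWpos.le
      linarith [h3]
    have hΔpos : 0 < t' - T := by linarith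
    have hchain : C * ξ iX * E₀ * (1 - α * (t' - T)) < C * ξ iX * E₀ + (-γ) * (t' - T) := by
      calc C * ξ iX * E₀ * (1 - α * (t' - T)) ≤ C * ξ iX * Real.exp (-α * t') := hP
        _ < sg * x t' iX := ht'3
        _ ≤ sg * x T iX + (-γ) * (t' - T) := hlim
        _ = C * ξ iX * E₀ + (-γ) * (t' - T) := by rw [heq]
    have hfin2 : γ * (t' - T) < α * (C * ξ iX * E₀) * (t' - T) := by linarith [hchain]
    have hcontra : γ < α * (C * ξ iX * E₀) := lt_of_mul_lt_mul_right hfin2 hΔpos.le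
    rw [hγ_def] at hcontra
    clear_value γ δ E₀ μ T F
    linarith only [hcontra, hCEμ]
  -- conclude exponential decay from `main`
  have hfin : ∀ i, |x t i| ≤ (‖φ‖ / xm) * ξ i * Real.exp (-α * t) := by
    intro i
    have hε : ∀ ε > (0:ℝ), |x t i| ≤ (‖φ‖ / xm + ε) * ξ i * Real.exp (-α * t) := by
      intro ε hεp
      refine main (‖φ‖ / xm + ε) (by
        have h0 : 0 ≤ ‖φ‖ / xm := div_nonneg (norm_nonneg φ) hxm_pos.le
        linarith) ?_ t (by linarith) i
      intro s hs i'
      have h1 := hφbound s hs i'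
      have h2 : ‖φ‖ = (‖φ‖ / xm) * xm := by field_simp
      have h3 : (‖φ‖ / xm) * xm ≤ (‖φ‖ / xm) * ξ i' :=
        mul_le_mul_of_nonneg_left (hxm_le i') (div_nonneg (norm_nonneg φ) hxm_pos.le)
      have h4 : (‖φ‖ / xm) * ξ i' ≤ (‖φ‖ / xm + ε) * ξ i' :=
        mul_le_mul_of_nonneg_right (by linarith) (hξ i').le
      linarith
    have hpos : 0 < ξ i * Real.exp (-α * t) := mul_pos (hξ i) (Real.exp_pos _)
    refine le_of_forall_pos_le_add fun ε' hε' => ?_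
    have h5 := hε (ε' / (ξ i * Real.exp (-α * t))) (div_pos hε' hpos)
    calc |x t i| ≤ (‖φ‖ / xm + ε' / (ξ i * Real.exp (-α * t))) * ξ i * Real.exp (-α * t) := h5
      _ = (‖φ‖ / xm) * ξ i * Real.exp (-α * t)
          + (ε' / (ξ i * Real.exp (-α * t))) * (ξ i * Real.exp (-α * t)) := by ring
      _ = (‖φ‖ / xm) * ξ i * Real.exp (-α * t) + ε' := by
          rw [div_mul_cancel₀ _ (ne_of_gt hpos)]
  have hrhs0 : 0 ≤ X / xm * Real.exp (-α * t) * ‖φ‖ :=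
    mul_nonneg (mul_nonneg (div_pos hX_pos hxm_pos).le (Real.exp_pos _).le) (norm_nonneg _)
  refine (pi_norm_le_iff_of_nonneg hrhs0).mpr fun i => ?_
  rw [Real.norm_eq_abs]
  calc |x t i| ≤ (‖φ‖ / xm) * ξ i * Real.exp (-α * t) := hfin i
    _ ≤ X / xm * Real.exp (-α * t) * ‖φ‖ := by
        have h1 : ‖φ‖ * ξ i ≤ ‖φ‖ * X := mul_le_mul_of_nonneg_left (hle_X i) (norm_nonneg φ)
        have h2 : (0:ℝ) < Real.exp (-α * t) := Real.exp_pos _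
        rw [show (‖φ‖ / xm) * ξ i * Real.exp (-α * t)
              = ‖φ‖ * ξ i * Real.exp (-α * t) / xm from by ring,
            show X / xm * Real.exp (-α * t) * ‖φ‖
              = ‖φ‖ * X * Real.exp (-α * t) / xm from by ring]
        exact (div_le_div_iff_of_pos_right hxm_pos).mpr (mul_le_mul_of_nonneg_right h1 h2.le)

end
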